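/- Let d ≥ n ≥ 1 be integers and k a field. The local ring ℚuotient R = k[w₁,...,wₙ, z₀]/(C(d,1)z₀^{d-1} + w₁, C(d,2)z₀^{d-2} + w₂², ..., C(d,n)z₀^{d-n} + wₙⁿ, z₀^d) is a finite-dimensional k-algebra of dimension d·n! over k. -/

import Mathlib

open MvPolynomial

noncomputable section
namespace Stmt7

variable {B : Type} [CommRing B]

def gen1 (m e₀ : ℕ) (b₀ : B) (e : Fin m → ℕ) (p : Fin m → Polynomial B) :
    Fin (m + 1) → MvPolynomial (Fin (m + 1)) B := fun j =>
  Fin.lastCases (X (Fin.last m) ^ e₀ - C b₀)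
    (fun i => X i.castSucc ^ e i - Polynomial.aeval (X (Fin.last m)) (p i)) j

def gen2 (m e₀ : ℕ) (b₀ : B) (e : Fin m → ℕ) (p : Fin m → Polynomial B) :
    Fin m → MvPolynomial (Fin m) (AdjoinRoot (Polynomial.X ^ e₀ - Polynomial.C b₀)) := fun i =>
  X i ^ e i - C (Polynomial.aeval (AdjoinRoot.root _) (p i))

variable (m e₀ : ℕ) (b₀ : B) (e : Fin m → ℕ) (p : Fin m → Polynomial B)

local notation "q" => (Polynomial.X ^ e₀ - Polynomial.C b₀ : Polynomial B)

def J1 : Ideal (MvPolynomial (Fin (m + 1)) B) := Ideal.span (Set.range (gen1 m e₀ b₀ e p))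
def J2 : Ideal (MvPolynomial (Fin m) (AdjoinRoot q)) := Ideal.span (Set.range (gen2 m e₀ b₀ e p))

lemma root_pow : (AdjoinRoot.root q) ^ e₀ = algebraMap B (AdjoinRoot q) b₀ := by
  have h2 : Polynomial.aeval (AdjoinRoot.root q) q = 0 := by
    rw [AdjoinRoot.aeval_eq, AdjoinRoot.mk_self]
  rw [map_sub, map_pow, Polynomial.aeval_X, Polynomial.aeval_C, sub_eq_zero] at h2
  exact h2

/-- forward algebra hom on the polynomial ring -/
def fwd0 : MvPolynomial (Fin (m + 1)) B →ₐ[B]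
    (MvPolynomial (Fin m) (AdjoinRoot q) ⧸ J2 m e₀ b₀ e p) :=
  aeval (fun j => Fin.lastCases
    ((Ideal.Quotient.mkₐ B (J2 m e₀ b₀ e p)) (C (AdjoinRoot.root q)))
    (fun i => (Ideal.Quotient.mkₐ B (J2 m e₀ b₀ e p)) (X i)) j)

lemma fwd0_gen (j : Fin (m + 1)) : fwd0 m e₀ b₀ e p (gen1 m e₀ b₀ e p j) = 0 := by
  set mk2 := Ideal.Quotient.mkₐ B (J2 m e₀ b₀ e p) with hmk2
  have halg : ∀ x : B, algebraMap B (MvPolynomial (Fin m) (AdjoinRoot q) ⧸ J2 m e₀ b₀ e p) x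
      = mk2 (C (algebraMap B (AdjoinRoot q) x)) := by
    intro x
    rw [← mk2.commutes x, IsScalarTower.algebraMap_apply B (AdjoinRoot q)
      (MvPolynomial (Fin m) (AdjoinRoot q)), MvPolynomial.algebraMap_eq]
  induction j using Fin.lastCases with
  | last =>
    have : gen1 m e₀ b₀ e p (Fin.last m) = X (Fin.last m) ^ e₀ - C b₀ := by
      simp [gen1]
    rw [this, map_sub, map_pow, fwd0, aeval_X, Fin.lastCases_last, aeval_C, halg,
      ← map_pow, ← map_pow, root_pow]
    exact sub_self _
  | cast i =>
    have hg : gen1 m e₀ b₀ e p i.castSucc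
        = X i.castSucc ^ e i - Polynomial.aeval (X (Fin.last m)) (p i) := by
      simp [gen1]
    have hcomm : fwd0 m e₀ b₀ e p (Polynomial.aeval (X (Fin.last m)) (p i))
        = Polynomial.aeval (fwd0 m e₀ b₀ e p (X (Fin.last m))) (p i) :=
      (Polynomial.aeval_algHom_apply (fwd0 m e₀ b₀ e p) (X (Fin.last m)) (p i)).symm
    have hXlast : fwd0 m e₀ b₀ e p (X (Fin.last m)) = mk2 (C (AdjoinRoot.root q)) := by
      rw [fwd0, aeval_X, Fin.lastCases_last]
    have hC : ∀ y : AdjoinRoot q, mk2 (C y)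
        = (mk2.comp (IsScalarTower.toAlgHom B (AdjoinRoot q) (MvPolynomial (Fin m) (AdjoinRoot q)))) y := by
      intro y
      simp [IsScalarTower.toAlgHom_apply, MvPolynomial.algebraMap_eq]
    rw [hg, map_sub, map_pow, hcomm, hXlast, fwd0, aeval_X, Fin.lastCases_castSucc,
      hC (AdjoinRoot.root q), Polynomial.aeval_algHom_apply, ← hC]
    have : mk2 (gen2 m e₀ b₀ e p i) = 0 := by
      rw [Ideal.Quotient.mkₐ_eq_mk, Ideal.Quotient.eq_zero_iff_mem]
      exact Ideal.subset_span ⟨i, rfl⟩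
    rw [← this, gen2, map_sub, map_pow]

end Stmt7

section Rev
namespace Stmt7
variable {B : Type} [CommRing B]
variable (m e₀ : ℕ) (b₀ : B) (e : Fin m → ℕ) (p : Fin m → Polynomial B)
local notation "q" => (Polynomial.X ^ e₀ - Polynomial.C b₀ : Polynomial B)

lemma mk1_gen (j : Fin (m+1)) :
    Ideal.Quotient.mkₐ B (J1 m e₀ b₀ e p) (gen1 m e₀ b₀ e p j) = 0 := by
  rw [Ideal.Quotient.mkₐ_eq_mk, Ideal.Quotient.eq_zero_iff_mem]
  exact Ideal.subset_span ⟨j, rfl⟩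

lemma aeval_q_zero :
    Polynomial.aeval ((Ideal.Quotient.mkₐ B (J1 m e₀ b₀ e p)) (X (Fin.last m))) q = 0 := by
  rw [map_sub, map_pow, Polynomial.aeval_X, Polynomial.aeval_C,
    ← (Ideal.Quotient.mkₐ B (J1 m e₀ b₀ e p)).commutes b₀, ← map_pow]
  rw [← map_sub]
  have := mk1_gen m e₀ b₀ e p (Fin.last m)
  have hg : gen1 m e₀ b₀ e p (Fin.last m) = X (Fin.last m) ^ e₀ - C b₀ := by simp [gen1]
  rw [hg] at this
  simpa [MvPolynomial.algebraMap_eq] using this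

def v : AdjoinRoot q →ₐ[B] (MvPolynomial (Fin (m+1)) B ⧸ J1 m e₀ b₀ e p) :=
  AdjoinRoot.liftAlgHom q (Algebra.ofId B _) ((Ideal.Quotient.mkₐ B (J1 m e₀ b₀ e p)) (X (Fin.last m)))
    (by rw [Algebra.toRingHom_ofId, ← Polynomial.aeval_def]; exact aeval_q_zero m e₀ b₀ e p)

def rev0 : MvPolynomial (Fin m) (AdjoinRoot q) →ₐ[B]
    (MvPolynomial (Fin (m+1)) B ⧸ J1 m e₀ b₀ e p) :=
  aevalTower (v m e₀ b₀ e p) (fun i => (Ideal.Quotient.mkₐ B (J1 m e₀ b₀ e p)) (X i.castSucc))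

lemma rev0_gen (i : Fin m) : rev0 m e₀ b₀ e p (gen2 m e₀ b₀ e p i) = 0 := by
  set mk1 := Ideal.Quotient.mkₐ B (J1 m e₀ b₀ e p) with hmk1
  have h1 : rev0 m e₀ b₀ e p (C (Polynomial.aeval (AdjoinRoot.root q) (p i)))
      = Polynomial.aeval (mk1 (X (Fin.last m))) (p i) := by
    rw [rev0, aevalTower_C, ← AdjoinRoot.liftAlgHom_root (i := Algebra.ofId B _)
        (x := (Ideal.Quotient.mkₐ B (J1 m e₀ b₀ e p)) (X (Fin.last m))) (h := aeval_q_zero m e₀ b₀ e p),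
      Polynomial.aeval_algHom_apply]
    rfl
  have h2 : Polynomial.aeval (mk1 (X (Fin.last m))) (p i)
      = mk1 (Polynomial.aeval (X (Fin.last m)) (p i)) :=
    Polynomial.aeval_algHom_apply mk1 (X (Fin.last m)) (p i)
  have hX : rev0 m e₀ b₀ e p (X i) = mk1 (X i.castSucc) := by
    rw [rev0, aevalTower_X]
  rw [gen2, map_sub, map_pow, hX, h1, h2, ← map_pow, ← map_sub]
  have := mk1_gen m e₀ b₀ e p i.castSucc
  have hg : gen1 m e₀ b₀ e p i.castSucc
      = X i.castSucc ^ e i - Polynomial.aeval (X (Fin.last m)) (p i) := by simp [gen1]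
  rw [hg] at this
  exact this

end Stmt7
end Rev

section Equiv
namespace Stmt7
variable {B : Type} [CommRing B]
variable (m e₀ : ℕ) (b₀ : B) (e : Fin m → ℕ) (p : Fin m → Polynomial B)
local notation "q" => (Polynomial.X ^ e₀ - Polynomial.C b₀ : Polynomial B)

def fwd : (MvPolynomial (Fin (m+1)) B ⧸ J1 m e₀ b₀ e p) →ₐ[B]
    (MvPolynomial (Fin m) (AdjoinRoot q) ⧸ J2 m e₀ b₀ e p) :=
  Ideal.Quotient.liftₐ _ (fwd0 m e₀ b₀ e p) (by
    intro a ha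
    refine Submodule.span_induction ?_ ?_ ?_ ?_ ha
    · rintro x ⟨j, rfl⟩; exact fwd0_gen m e₀ b₀ e p j
    · exact map_zero _
    · intro x y _ _ hx hy; rw [map_add, hx, hy, add_zero]
    · intro r x _ hx; rw [smul_eq_mul, map_mul, hx, mul_zero])

def rev : (MvPolynomial (Fin m) (AdjoinRoot q) ⧸ J2 m e₀ b₀ e p) →ₐ[B]
    (MvPolynomial (Fin (m+1)) B ⧸ J1 m e₀ b₀ e p) :=
  Ideal.Quotient.liftₐ _ (rev0 m e₀ b₀ e p) (by
    intro a ha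
    refine Submodule.span_induction ?_ ?_ ?_ ?_ ha
    · rintro x ⟨j, rfl⟩; exact rev0_gen m e₀ b₀ e p j
    · exact map_zero _
    · intro x y _ _ hx hy; rw [map_add, hx, hy, add_zero]
    · intro r x _ hx; rw [smul_eq_mul, map_mul, hx, mul_zero])

lemma fwd_mk (x) : fwd m e₀ b₀ e p (Ideal.Quotient.mkₐ B (J1 m e₀ b₀ e p) x)
    = fwd0 m e₀ b₀ e p x := rfl

lemma rev_mk (x) : rev m e₀ b₀ e p (Ideal.Quotient.mkₐ B (J2 m e₀ b₀ e p) x)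
    = rev0 m e₀ b₀ e p x := rfl

def splitEquiv : (MvPolynomial (Fin (m+1)) B ⧸ J1 m e₀ b₀ e p) ≃ₐ[B]
    (MvPolynomial (Fin m) (AdjoinRoot q) ⧸ J2 m e₀ b₀ e p) := by
  refine AlgEquiv.ofAlgHom (fwd m e₀ b₀ e p) (rev m e₀ b₀ e p) ?_ ?_
  · -- fwd ∘ rev = id
    apply Ideal.Quotient.algHom_ext
    apply MvPolynomial.algHom_ext'
    · apply AdjoinRoot.algHom_ext
      show fwd m e₀ b₀ e p (rev m e₀ b₀ e p (Ideal.Quotient.mkₐ B _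
        (algebraMap (AdjoinRoot q) (MvPolynomial (Fin m) (AdjoinRoot q)) (AdjoinRoot.root q)))) = _
      rw [MvPolynomial.algebraMap_eq, rev_mk, rev0, aevalTower_C, v, AdjoinRoot.liftAlgHom_root,
        fwd_mk, fwd0, aeval_X, Fin.lastCases_last]
      simp [MvPolynomial.algebraMap_eq]
    · intro i
      show fwd m e₀ b₀ e p (rev m e₀ b₀ e p (Ideal.Quotient.mkₐ B _ (X i))) = _
      rw [rev_mk, rev0, aevalTower_X, fwd_mk, fwd0, aeval_X, Fin.lastCases_castSucc]
      rfl
  · -- rev ∘ fwd = id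
    apply Ideal.Quotient.algHom_ext
    apply MvPolynomial.algHom_ext
    intro j
    induction j using Fin.lastCases with
    | last =>
      show rev m e₀ b₀ e p (fwd m e₀ b₀ e p (Ideal.Quotient.mkₐ B _ (X (Fin.last m)))) = _
      rw [fwd_mk, fwd0, aeval_X, Fin.lastCases_last, rev_mk, rev0, aevalTower_C, v,
        AdjoinRoot.liftAlgHom_root]
      rfl
    | cast i =>
      show rev m e₀ b₀ e p (fwd m e₀ b₀ e p (Ideal.Quotient.mkₐ B _ (X i.castSucc))) = _
      rw [fwd_mk, fwd0, aeval_X, Fin.lastCases_castSucc, rev_mk, rev0, aevalTower_X]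
      rfl

end Stmt7
end Equiv

namespace Stmt7

theorem key (k : Type) [Field k] (m : ℕ) :
    ∀ (B : Type) [CommRing B] [Algebra k B],
      ∀ (_ : Module.Free k B) (_ : Module.Finite k B) (_ : Nontrivial B)
        (e : Fin m → ℕ) (_ : ∀ i, e i ≠ 0) (b : Fin m → B),
      Module.Free k (MvPolynomial (Fin m) B ⧸
          Ideal.span (Set.range fun i => X i ^ e i - C (b i))) ∧
      Module.Finite k (MvPolynomial (Fin m) B ⧸
          Ideal.span (Set.range fun i => X i ^ e i - C (b i))) ∧
      Module.finrank k (MvPolynomial (Fin m) B ⧸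
          Ideal.span (Set.range fun i => X i ^ e i - C (b i)))
        = Module.finrank k B * ∏ i, e i := by
  induction m with
  | zero =>
    intro B _ _ hfree hfin hnt e he b
    have hr : (Set.range fun i : Fin 0 => X i ^ e i - C (b i)) = ∅ := Set.range_eq_empty _
    rw [hr, Ideal.span_empty]
    have hbij : Function.Bijective (Ideal.Quotient.mkₐ k (⊥ : Ideal (MvPolynomial (Fin 0) B))) := by
      constructor
      · intro x y h
        have h' : Ideal.Quotient.mk (⊥ : Ideal (MvPolynomial (Fin 0) B)) x
            = Ideal.Quotient.mk ⊥ y := h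
        rw [Ideal.Quotient.eq] at h'
        simpa [sub_eq_zero] using h'
      · exact Ideal.Quotient.mk_surjective
    let E : (MvPolynomial (Fin 0) B ⧸ (⊥ : Ideal (MvPolynomial (Fin 0) B))) ≃ₐ[k] B :=
      (AlgEquiv.ofBijective _ hbij).symm.trans
        ((isEmptyAlgEquiv B (Fin 0)).restrictScalars k)
    refine ⟨Module.Free.of_equiv' hfree E.symm.toLinearEquiv, Module.Finite.equiv E.symm.toLinearEquiv, ?_⟩
    rw [E.toLinearEquiv.finrank_eq]
    simp
  | succ m ih =>
    intro B _ _ hfree hfin hnt e he b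
    set e₀ := e (Fin.last m) with he₀
    set b₀ := b (Fin.last m) with hb₀
    set q : Polynomial B := Polynomial.X ^ e₀ - Polynomial.C b₀ with hqdef
    have hq : q.Monic := Polynomial.monic_X_pow_sub_C _ (he _)
    set A' := AdjoinRoot q with hA'
    let pb : PowerBasis B A' := AdjoinRoot.powerBasis' hq
    have hdim : pb.dim = e₀ := by
      show q.natDegree = e₀
      rw [hqdef, Polynomial.natDegree_X_pow_sub_C]
    haveI : Module.Free B A' := Module.Free.of_basis pb.basis
    haveI : Module.Finite B A' := Module.Finite.of_basis pb.basis
    haveI : Module.Free k A' :=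
      Module.Free.of_basis ((Module.Free.chooseBasis k B).smulTower pb.basis)
    haveI : Module.Finite k A' := Module.Finite.trans B A'
    have hntA' : Nontrivial A' := by
      have : pb.dim ≠ 0 := by rw [hdim]; exact he _
      exact nontrivial_of_ne (pb.basis ⟨0, Nat.pos_of_ne_zero this⟩) 0
        (pb.basis.ne_zero _)
    have hrankA' : Module.finrank k A' = Module.finrank k B * e₀ := by
      rw [← Module.finrank_mul_finrank k B A', PowerBasis.finrank pb, hdim]
    obtain ⟨ihF, ihFin, ihrank⟩ := ih A' inferInstance inferInstance hntA'
      (fun i => e i.castSucc) (fun i => he _)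
      (fun i => Polynomial.aeval (AdjoinRoot.root q) (Polynomial.C (b i.castSucc)))
    have hgen : (fun i : Fin (m+1) => X i ^ e i - C (b i))
        = gen1 m e₀ b₀ (fun i => e i.castSucc) (fun i => Polynomial.C (b i.castSucc)) := by
      funext j
      induction j using Fin.lastCases with
      | last => simp [gen1]; rfl
      | cast i => simp [gen1, MvPolynomial.algebraMap_eq]
    have hJ : Ideal.span (Set.range fun i : Fin (m+1) => X i ^ e i - C (b i))
        = J1 m e₀ b₀ (fun i => e i.castSucc) (fun i => Polynomial.C (b i.castSucc)) := by
      rw [J1, hgen]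
    let E := ((splitEquiv m e₀ b₀ (fun i => e i.castSucc)
      (fun i => Polynomial.C (b i.castSucc))).restrictScalars k)
    have hF2 : Module.Free k (MvPolynomial (Fin m) A' ⧸
        J2 m e₀ b₀ (fun i => e i.castSucc) (fun i => Polynomial.C (b i.castSucc))) := ihF
    have hFin2 : Module.Finite k (MvPolynomial (Fin m) A' ⧸
        J2 m e₀ b₀ (fun i => e i.castSucc) (fun i => Polynomial.C (b i.castSucc))) := ihFin
    have hrank2 : Module.finrank k (MvPolynomial (Fin m) A' ⧸
        J2 m e₀ b₀ (fun i => e i.castSucc) (fun i => Polynomial.C (b i.castSucc)))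
        = Module.finrank k A' * ∏ i : Fin m, e i.castSucc := ihrank
    rw [hJ]
    haveI := hFin2
    refine ⟨Module.Free.of_equiv' hF2 E.symm.toLinearEquiv,
      Module.Finite.equiv E.symm.toLinearEquiv, ?_⟩
    rw [E.toLinearEquiv.finrank_eq, hrank2, hrankA', Fin.prod_univ_castSucc]
    ring

end Stmt7


end


/-- Let `d ≥ n ≥ 1` be integers and `k` a field with `char k = 0` or `char k > d`.
The quotient `R = k[w₁,…,wₙ,z₀]/(C(d,1)z₀^{d-1} + w₁, C(d,2)z₀^{d-2} + w₂², …,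
C(d,n)z₀^{d-n} + wₙⁿ, z₀^d)` is a finite-dimensional `k`-algebra of dimension
`d · n!` over `k`. Here the variable `X i` for `i < n` plays the role of `w_{i+1}`
and `X (Fin.last n)` plays the role of `z₀`. -/
theorem stmt_7 (k : Type) [Field k] (n d : ℕ) (hn : 1 ≤ n) (hnd : n ≤ d)
    (hchar : CharZero k ∨ d < ringChar k) :
    let z : MvPolynomial (Fin (n + 1)) k := X (Fin.last n)
    let g : Fin (n + 1) → MvPolynomial (Fin (n + 1)) k := fun i =>
      if hi : (i : ℕ) < n then
        C ((d.choose ((i : ℕ) + 1) : ℕ) : k) * z ^ (d - ((i : ℕ) + 1)) +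
          X i ^ ((i : ℕ) + 1)
      else z ^ d
    Module.finrank k
      (MvPolynomial (Fin (n + 1)) k ⧸ Ideal.span (Set.range g)) = d * n.factorial := by
  intro z g
  have hd : d ≠ 0 := by omega
  set p : Fin n → Polynomial k := fun i =>
    -(Polynomial.C ((d.choose ((i : ℕ) + 1) : ℕ) : k) * Polynomial.X ^ (d - ((i : ℕ) + 1)))
    with hp
  have hg : g = Stmt7.gen1 n d (0 : k) (fun i => (i : ℕ) + 1) p := by
    funext j
    induction j using Fin.lastCases with
    | last =>
      have h1 : g (Fin.last n) = z ^ d := by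
        simp only [g]
        rw [dif_neg (by simp)]
      rw [h1]
      simp [Stmt7.gen1, z]
    | cast i =>
      have h1 : g i.castSucc = C ((d.choose ((i : ℕ) + 1) : ℕ) : k) * z ^ (d - ((i : ℕ) + 1)) +
          X i.castSucc ^ ((i : ℕ) + 1) := by
        simp only [g]
        rw [dif_pos (by simp [i.isLt])]
        simp
      rw [h1]
      simp only [Stmt7.gen1, Fin.lastCases_castSucc, hp, map_neg, map_mul, map_pow,
        Polynomial.aeval_C, Polynomial.aeval_X, MvPolynomial.algebraMap_eq, z]
      ring
  set q : Polynomial k := Polynomial.X ^ d - Polynomial.C (0 : k) with hqdef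
  have hq : q.Monic := Polynomial.monic_X_pow_sub_C _ hd
  set A' := AdjoinRoot q with hA'
  let pb : PowerBasis k A' := AdjoinRoot.powerBasis' hq
  have hdim : pb.dim = d := by
    show q.natDegree = d
    rw [hqdef, Polynomial.natDegree_X_pow_sub_C]
  haveI : Module.Free k A' := Module.Free.of_basis pb.basis
  haveI : Module.Finite k A' := Module.Finite.of_basis pb.basis
  have hntA' : Nontrivial A' := by
    have hpos : 0 < pb.dim := by rw [hdim]; omega
    exact nontrivial_of_ne (pb.basis ⟨0, hpos⟩) 0 (pb.basis.ne_zero _)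
  have hrk : Module.finrank k A' = d := by rw [PowerBasis.finrank pb, hdim]
  obtain ⟨-, -, hr⟩ := Stmt7.key k n A' inferInstance inferInstance hntA'
    (fun i => (i : ℕ) + 1) (fun i => Nat.succ_ne_zero _)
    (fun i => Polynomial.aeval (AdjoinRoot.root q) (p i))
  have hr2 : Module.finrank k (MvPolynomial (Fin n) A' ⧸
      Stmt7.J2 n d (0 : k) (fun i => (i : ℕ) + 1) p)
      = Module.finrank k A' * ∏ i : Fin n, ((i : ℕ) + 1) := hr
  have hJ : Ideal.span (Set.range g) = Stmt7.J1 n d (0 : k) (fun i => (i : ℕ) + 1) p := by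
    rw [Stmt7.J1, hg]
  let E := Stmt7.splitEquiv n d (0 : k) (fun i => (i : ℕ) + 1) p
  rw [hJ, E.toLinearEquiv.finrank_eq, hr2, hrk]
  congr 1
  rw [Fin.prod_univ_eq_prod_range (fun i => i + 1) n]
  exact Finset.prod_range_add_one_eq_factorial n
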